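/- arXiv:2203.05943 — 3 statements merged into one kernel-verified Lean document; each statement's English description precedes it below -/
import Mathlib

section
/- If Q is a finite set of points in R^N in general position (no d+2 points of Q lie on a common (d-1)-dimensional sphere, where d = dim(Aff Q)), then the Delaunay complex Del(Q) is geometrically realized: every Delaunay simplex is non-degenerate, and for any two Delaunay simplices α, β, the convex hull of α ∩ β equals Conv(α) ∩ Conv(β). -/
open Metric Set
open scoped Classical

noncomputable section

abbrev Euc (N : ℕ) := EuclideanSpace ℝ (Fin N)

variable {N : ℕ}

/-- The medial axis of `A`: points with at least two closest points in `A`. -/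
def medialAxis (A : Set (Euc N)) : Set (Euc N) :=
  {x | ∃ a ∈ A, ∃ b ∈ A, a ≠ b ∧ dist x a = infDist x A ∧ dist x b = infDist x A}

/-- `p` is a nearest point of `A` to `x`. -/
def IsNearestPt (A : Set (Euc N)) (x p : Euc N) : Prop :=
  p ∈ A ∧ dist x p = infDist x A

/-- `π` is a nearest-point projection map onto `A`, defined off the medial axis. -/
def IsNearestPtProj (A : Set (Euc N)) (π : Euc N → Euc N) : Prop :=
  ∀ x, x ∉ medialAxis A → IsNearestPt A x (π x)

/-- The angle between two linear subspaces: sup over unit vectors of `V₀` of the inf of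
angles with unit vectors of `V₁`. -/
def subAngle (V₀ V₁ : Submodule ℝ (Euc N)) : ℝ :=
  sSup {a | ∃ v₀ ∈ V₀, ‖v₀‖ = 1 ∧
    a = sInf {b | ∃ v₁ ∈ V₁, ‖v₁‖ = 1 ∧ b = InnerProductGeometry.angle v₀ v₁}}

/-- Angle between two affine subspaces. -/
def affAngle (H₀ H₁ : AffineSubspace ℝ (Euc N)) : ℝ :=
  subAngle H₀.direction H₁.direction

/-- Angle between the line through `u, v` and the affine subspace `H`. -/
def lineAngle (u v : Euc N) (H : AffineSubspace ℝ (Euc N)) : ℝ :=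
  subAngle (Submodule.span ℝ {v - u}) H.direction

/-- Orthogonal projection onto an affine subspace (the identity if `H` is empty). -/
def projA (H : AffineSubspace ℝ (Euc N)) (x : Euc N) : Euc N :=
  if h : (H : Set (Euc N)).Nonempty then
    h.choose + (Submodule.orthogonalProjectionOnto H.direction (x - h.choose) : Euc N)
  else x

/-- The minimal height of a simplex (over all vertices, distance to opposite facet). -/
def height (σ : Finset (Euc N)) : ℝ :=
  sInf ((fun v => infDist v (affineSpan ℝ ((σ.erase v : Finset (Euc N)) : Set (Euc N)))) '' σ)

/-- `σ` is a non-degenerate simplex: its vertices are affinely independent. -/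
def Nondegenerate (σ : Finset (Euc N)) : Prop :=
  AffineIndependent ℝ (fun p : σ => (p : Euc N))

/-- The sphere centered at `z` of radius `r` circumscribes `σ`. -/
def IsCircum (σ : Finset (Euc N)) (z : Euc N) (r : ℝ) : Prop :=
  ∀ p ∈ σ, dist p z = r

/-- `(z, r)` is the smallest circumscribing sphere of `σ`. -/
def IsMinCircum (σ : Finset (Euc N)) (z : Euc N) (r : ℝ) : Prop :=
  IsCircum σ z r ∧ ∀ z' r', IsCircum σ z' r' → r ≤ r'

/-- `(c, r)` is the smallest enclosing ball of `σ`. -/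
def IsSEB (σ : Finset (Euc N)) (c : Euc N) (r : ℝ) : Prop :=
  (∀ p ∈ σ, dist p c ≤ r) ∧ ∀ c' r', (∀ p ∈ σ, dist p c' ≤ r') → r ≤ r'

/-- `σ` is a Delaunay simplex of the point set `Q`: some circumscribing sphere of `σ`
bounds a ball containing no point of `Q` in its interior. -/
def IsDelaunay (Q : Set (Euc N)) (σ : Finset (Euc N)) : Prop :=
  (σ : Set (Euc N)) ⊆ Q ∧ ∃ z r, IsCircum σ z r ∧ ∀ q ∈ Q, r ≤ dist q z

/-- Separation of a point set: infimum of pairwise distances. -/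
def sep (X : Set (Euc N)) : ℝ :=
  sInf {r | ∃ x ∈ X, ∃ y ∈ X, x ≠ y ∧ r = dist x y}

/-- A relation is a multiplicative `M`-distortion. -/
def MulDistortion (R : Set (Euc N × Euc N)) (M : ℝ) : Prop :=
  ∀ p ∈ R, ∀ q ∈ R,
    (1 / (1 + M)) * dist p.1 q.1 ≤ dist p.2 q.2 ∧ dist p.2 q.2 ≤ (1 + M) * dist p.1 q.1

/-- A relation is an additive `A`-distortion. -/
def AddDistortion (R : Set (Euc N × Euc N)) (A : ℝ) : Prop :=
  ∀ p ∈ R, ∀ q ∈ R, |dist p.2 q.2 - dist p.1 q.1| ≤ A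

/-- A relation is one-to-one: injective and functional. -/
def OneToOneRel (R : Set (Euc N × Euc N)) : Prop :=
  (∀ p ∈ R, ∀ q ∈ R, p.2 = q.2 → p.1 = q.1) ∧ (∀ p ∈ R, ∀ q ∈ R, p.1 = q.1 → p.2 = q.2)

/-- `M` is a `C²` `d`-dimensional submanifold of `ℝᴺ` with tangent spaces given by `T`. -/
def IsC2Submanifold (d : ℕ) (M : Set (Euc N)) (T : Euc N → Submodule ℝ (Euc N)) : Prop :=
  ∀ m ∈ M, ∃ (φ : EuclideanSpace ℝ (Fin d) → Euc N) (U : Set (Euc N)),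
    IsOpen U ∧ m ∈ U ∧ ContDiff ℝ 2 φ ∧ Function.Injective φ ∧
    (∀ x, Function.Injective (fderiv ℝ φ x)) ∧
    Set.range φ = M ∩ U ∧
    ∀ x, T (φ x) = LinearMap.range ((fderiv ℝ φ x).toLinearMap)

/-- The family of affine spaces associated to a simplex `σ`: the affine hull of `σ`
together with the tangent spaces at projections of points of `Conv σ` onto `M`. -/
def stdFamily (σ : Finset (Euc N)) (T : Euc N → Submodule ℝ (Euc N)) (πM : Euc N → Euc N) :
    Set (AffineSubspace ℝ (Euc N)) :=
  insert (affineSpan ℝ (σ : Set (Euc N)))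
    ((fun x => AffineSubspace.mk' (πM x) (T (πM x))) '' convexHull ℝ (σ : Set (Euc N)))

end


open scoped RealInnerProductSpace

noncomputable section AuxProof

variable {N : ℕ}

/-- Key lemma: the "growing" argument.  If `S ⊆ Q` is nonempty, lies on a sphere centered
in the affine span of `Q`, and is "defective" (`finrank vectorSpan S + 2 ≤ card S`), then we
reach a contradiction with general position. -/
lemma delaunay_grow (Q : Finset (Euc N))
    (hgen : ∀ S : Finset (Euc N), S ⊆ Q →
      S.card = Module.finrank ℝ (affineSpan ℝ (Q : Set (Euc N))).direction + 2 →
      ¬ ∃ (z : Euc N) (r : ℝ), z ∈ affineSpan ℝ (Q : Set (Euc N)) ∧ ∀ p ∈ S, dist p z = r) :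
    ∀ (n : ℕ) (S : Finset (Euc N)), S ⊆ Q → S.Nonempty →
      ∀ z : Euc N, z ∈ affineSpan ℝ (Q : Set (Euc N)) →
      ∀ r : ℝ, (∀ p ∈ S, dist p z = r) →
      Module.finrank ℝ (vectorSpan ℝ (S : Set (Euc N))) + 2 ≤ S.card →
      Q.card ≤ S.card + n → False := by
  have done : ∀ (S : Finset (Euc N)), S ⊆ Q →
      ∀ z : Euc N, z ∈ affineSpan ℝ (Q : Set (Euc N)) →
      ∀ r : ℝ, (∀ p ∈ S, dist p z = r) →
      Module.finrank ℝ (vectorSpan ℝ (S : Set (Euc N))) + 2 ≤ S.card →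
      (Q : Set (Euc N)) ⊆ (affineSpan ℝ (S : Set (Euc N)) : Set (Euc N)) → False := by
    intro S hSQ z hzA r hzr hinv hsub
    have hspan : affineSpan ℝ (S : Set (Euc N)) = affineSpan ℝ (Q : Set (Euc N)) :=
      le_antisymm (affineSpan_mono ℝ (Finset.coe_subset.mpr hSQ)) (affineSpan_le.mpr hsub)
    have hrk : Module.finrank ℝ (vectorSpan ℝ (S : Set (Euc N)))
        = Module.finrank ℝ (affineSpan ℝ (Q : Set (Euc N))).direction := by
      rw [← direction_affineSpan, hspan]
    rw [hrk] at hinv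
    obtain ⟨S', hS'sub, hS'card⟩ := Finset.exists_subset_card_eq hinv
    exact hgen S' (hS'sub.trans hSQ) hS'card ⟨z, r, hzA, fun p hp => hzr p (hS'sub hp)⟩
  intro n
  induction n with
  | zero =>
    intro S hSQ _ z hzA r hzr hinv hn
    have hSeqQ : S = Q := Finset.eq_of_subset_of_card_le hSQ (by omega)
    exact done S hSQ z hzA r hzr hinv (by rw [hSeqQ]; exact subset_affineSpan ℝ _)
  | succ n ih =>
    intro S hSQ hSne z hzA r hzr hinv hn
    by_cases hsub : (Q : Set (Euc N)) ⊆ (affineSpan ℝ (S : Set (Euc N)) : Set (Euc N))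
    · exact done S hSQ z hzA r hzr hinv hsub
    · obtain ⟨q, hqQ, hq⟩ : ∃ q ∈ Q, q ∉ affineSpan ℝ (S : Set (Euc N)) := by
        rw [Set.not_subset] at hsub
        obtain ⟨q, hq1, hq2⟩ := hsub
        exact ⟨q, Finset.mem_coe.mp hq1, hq2⟩
      obtain ⟨p0, hp0⟩ := hSne
      have hp0A : p0 ∈ affineSpan ℝ (S : Set (Euc N)) :=
        subset_affineSpan ℝ _ (Finset.mem_coe.mpr hp0)
      set U : Submodule ℝ (Euc N) := vectorSpan ℝ (S : Set (Euc N)) with hU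
      set W : Submodule ℝ (Euc N) := (affineSpan ℝ (Q : Set (Euc N))).direction with hW
      have hUW : U ≤ W := by
        rw [hU, ← direction_affineSpan]
        exact AffineSubspace.direction_le (affineSpan_mono ℝ (Finset.coe_subset.mpr hSQ))
      have hqp0W : q - p0 ∈ W := by
        have := AffineSubspace.vsub_mem_direction
          (subset_affineSpan ℝ (Q : Set (Euc N)) (Finset.mem_coe.mpr hqQ))
          (subset_affineSpan ℝ (Q : Set (Euc N)) (Finset.mem_coe.mpr (hSQ hp0)))
        rwa [vsub_eq_sub] at this
      set a : Euc N := (Submodule.orthogonalProjectionOnto U (q - p0) : Euc N) with ha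
      set b : Euc N := (q - p0) - a with hb
      have hbU : b ∈ Uᗮ := Submodule.sub_starProjection_mem_orthogonal (K := U) (q - p0)
      have hbW : b ∈ W := W.sub_mem hqp0W (hUW (Submodule.orthogonalProjectionOnto U (q - p0)).2)
      have hbne : b ≠ 0 := by
        intro h0
        apply hq
        have hqp0U : q - p0 ∈ U := by
          have : q - p0 = a := by rw [hb] at h0; linear_combination (norm := module) h0
          rw [this]; exact (Submodule.orthogonalProjectionOnto U (q - p0)).2
        have := AffineSubspace.vadd_mem_of_mem_direction
          (by rwa [direction_affineSpan]) hp0A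
        simpa [vadd_eq_add, sub_add_cancel] using this
      set c : ℝ := ‖q - z‖ ^ 2 - ‖p0 - z‖ ^ 2 with hc
      have hinnerb : ⟪q - p0, b⟫ = ‖b‖ ^ 2 := by
        have hab : q - p0 = a + b := by rw [hb]; abel
        have hab0 : ⟪a, b⟫ = 0 :=
          Submodule.inner_right_of_mem_orthogonal (Submodule.orthogonalProjectionOnto U (q - p0)).2 hbU
        rw [hab, inner_add_left, hab0, real_inner_self_eq_norm_sq]
        ring
      set t : ℝ := c / (2 * ‖b‖ ^ 2) with ht
      set v : Euc N := t • b with hv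
      have hvW : v ∈ W := W.smul_mem t hbW
      have hbsq : ‖b‖ ^ 2 ≠ 0 := by
        simpa using (norm_ne_zero_iff.mpr hbne)
      have hqv : ⟪q - p0, v⟫ = c / 2 := by
        rw [hv, real_inner_smul_right, hinnerb, ht]
        field_simp
      have hvU : ∀ u ∈ U, ⟪u, v⟫ = 0 := by
        intro u hu
        rw [hv, real_inner_smul_right,
          Submodule.inner_right_of_mem_orthogonal hu hbU, mul_zero]
      set z' : Euc N := z + v with hz'
      have hz'A : z' ∈ affineSpan ℝ (Q : Set (Euc N)) := by
        have h := AffineSubspace.vadd_mem_of_mem_direction hvW hzA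
        rw [vadd_eq_add] at h
        rw [hz', add_comm]
        exact h
      have hexp : ∀ y : Euc N, ‖y - z'‖ ^ 2 = ‖y - z‖ ^ 2 - 2 * ⟪y - z, v⟫ + ‖v‖ ^ 2 := by
        intro y
        have : y - z' = (y - z) - v := by rw [hz']; abel
        rw [this, norm_sub_sq_real]
      have hkey : ∀ p ∈ insert q S, ‖p - z'‖ ^ 2 = ‖p0 - z'‖ ^ 2 := by
        intro p hp
        have hp0' : ⟪p0 - z, v⟫ = ⟪p0 - z, v⟫ := rfl
        rcases Finset.mem_insert.mp hp with rfl | hpS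
        · have hsplit : ⟪p - z, v⟫ = ⟪p - p0, v⟫ + ⟪p0 - z, v⟫ := by
            rw [← inner_add_left]; congr 1; abel
          rw [hexp p, hexp p0, hsplit, hqv]
          rw [hc]
          ring
        · have hppU : p - p0 ∈ U := by
            have := AffineSubspace.vsub_mem_direction
              (subset_affineSpan ℝ (S : Set (Euc N)) (Finset.mem_coe.mpr hpS)) hp0A
            rwa [direction_affineSpan, vsub_eq_sub] at this
          have hsplit : ⟪p - z, v⟫ = ⟪p - p0, v⟫ + ⟪p0 - z, v⟫ := by
            rw [← inner_add_left]; congr 1; abel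
          have hnr : ‖p - z‖ = ‖p0 - z‖ := by
            have h1 := hzr p hpS
            have h2 := hzr p0 hp0
            rw [dist_eq_norm] at h1 h2
            rw [h1, h2]
          rw [hexp p, hexp p0, hsplit, hvU _ hppU, hnr]
          ring
      have hzr' : ∀ p ∈ insert q S, dist p z' = dist p0 z' := by
        intro p hp
        have h := hkey p hp
        have h1 : dist p z' = Real.sqrt (‖p - z'‖ ^ 2) := by
          rw [Real.sqrt_sq (norm_nonneg _), dist_eq_norm]
        rw [h1, h, Real.sqrt_sq (norm_nonneg _), dist_eq_norm]
      have hqS : q ∉ S := fun hmem => hq (subset_affineSpan ℝ _ (Finset.mem_coe.mpr hmem))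
      have hcard : (insert q S).card = S.card + 1 := Finset.card_insert_of_notMem hqS
      have hqp0ne : q - p0 ≠ 0 := by
        intro h0
        exact hq (by rw [sub_eq_zero] at h0; rw [h0]; exact hp0A)
      have hrk : Module.finrank ℝ (vectorSpan ℝ ((insert q S : Finset (Euc N)) : Set (Euc N)))
          ≤ Module.finrank ℝ U + 1 := by
        have hins : vectorSpan ℝ ((insert q S : Finset (Euc N)) : Set (Euc N))
            = Submodule.span ℝ {q - p0} ⊔ U := by
          rw [← direction_affineSpan, Finset.coe_insert, ← affineSpan_insert_affineSpan,
            AffineSubspace.direction_affineSpan_insert hp0A, direction_affineSpan, vsub_eq_sub]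
        rw [hins]
        calc Module.finrank ℝ ↥(Submodule.span ℝ ({q - p0} : Set (Euc N)) ⊔ U)
            ≤ Module.finrank ℝ ↥(Submodule.span ℝ ({q - p0} : Set (Euc N)))
              + Module.finrank ℝ U := Submodule.finrank_add_le_finrank_add_finrank _ _
          _ ≤ Module.finrank ℝ U + 1 := by
              rw [finrank_span_singleton hqp0ne]; omega
      refine ih (insert q S) (Finset.insert_subset hqQ hSQ) ⟨q, Finset.mem_insert_self q S⟩
        z' hz'A (dist p0 z') hzr' (by omega) (by omega)

/-- Any subset of `Q` lying on a sphere is affinely independent. -/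
lemma delaunay_indep (Q : Finset (Euc N))
    (hgen : ∀ S : Finset (Euc N), S ⊆ Q →
      S.card = Module.finrank ℝ (affineSpan ℝ (Q : Set (Euc N))).direction + 2 →
      ¬ ∃ (z : Euc N) (r : ℝ), z ∈ affineSpan ℝ (Q : Set (Euc N)) ∧ ∀ p ∈ S, dist p z = r)
    (T : Finset (Euc N)) (hTQ : T ⊆ Q) (z : Euc N) (r : ℝ)
    (hzr : ∀ p ∈ T, dist p z = r) :
    AffineIndependent ℝ (fun p : T => (p : Euc N)) := by
  by_contra hind
  have hTne : T.Nonempty := by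
    rcases T.eq_empty_or_nonempty with h | h
    · exfalso
      subst h
      haveI : IsEmpty {x // x ∈ (∅ : Finset (Euc N))} := ⟨fun x => Finset.notMem_empty _ x.2⟩
      exact hind (affineIndependent_of_subsingleton ℝ _)
    · exact h
  have hcard1 : 1 ≤ T.card := hTne.card_pos
  have hft : Fintype.card {x // x ∈ T} = (T.card - 1) + 1 := by
    rw [Fintype.card_coe]; omega
  have hrange : Set.range (fun p : T => (p : Euc N)) = (T : Set (Euc N)) := by
    ext y; simp
  have hnle : ¬ ((T.card - 1) ≤
      Module.finrank ℝ (vectorSpan ℝ (Set.range fun p : T => (p : Euc N)))) := by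
    rw [← affineIndependent_iff_le_finrank_vectorSpan ℝ _ hft]
    exact hind
  rw [hrange] at hnle
  have hinv : Module.finrank ℝ (vectorSpan ℝ (T : Set (Euc N))) + 2 ≤ T.card := by omega
  obtain ⟨t0, ht0⟩ := hTne
  set A := affineSpan ℝ (Q : Set (Euc N)) with hA
  set W : Submodule ℝ (Euc N) := A.direction with hWdef
  have ht0A : t0 ∈ A := subset_affineSpan ℝ _ (Finset.mem_coe.mpr (hTQ ht0))
  set z₀ : Euc N := t0 + (Submodule.orthogonalProjectionOnto W (z - t0) : Euc N) with hz₀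
  have hz₀A : z₀ ∈ A := by
    have h := AffineSubspace.vadd_mem_of_mem_direction
      (Submodule.orthogonalProjectionOnto W (z - t0)).2 ht0A
    rw [vadd_eq_add] at h
    rw [hz₀, add_comm]
    exact h
  have hperp : z - z₀ ∈ Wᗮ := by
    have h : (z - t0) - (Submodule.orthogonalProjectionOnto W (z - t0) : Euc N) ∈ Wᗮ :=
      Submodule.sub_starProjection_mem_orthogonal (K := W) (z - t0)
    have h2 : z - z₀ = (z - t0) - (Submodule.orthogonalProjectionOnto W (z - t0) : Euc N) := by
      rw [hz₀]; abel
    rwa [← h2] at h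
  have hdist : ∀ p ∈ T, dist p z₀ = dist t0 z₀ := by
    have hpy : ∀ p ∈ T, ‖p - z₀‖ ^ 2 = r ^ 2 - ‖z₀ - z‖ ^ 2 := by
      intro p hp
      have hpA : p ∈ A := subset_affineSpan ℝ _ (Finset.mem_coe.mpr (hTQ hp))
      have hpW : p - z₀ ∈ W := by
        have := AffineSubspace.vsub_mem_direction hpA hz₀A
        rwa [vsub_eq_sub] at this
      have hio : ⟪p - z₀, z₀ - z⟫ = 0 := by
        have : z₀ - z ∈ Wᗮ := by
          have := Wᗮ.neg_mem hperp
          simpa using this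
        exact Submodule.inner_right_of_mem_orthogonal hpW this
      have hsplit : p - z = (p - z₀) + (z₀ - z) := by abel
      have := hzr p hp
      rw [dist_eq_norm] at this
      have hnorm : ‖p - z‖ ^ 2 = ‖p - z₀‖ ^ 2 + ‖z₀ - z‖ ^ 2 := by
        rw [hsplit, norm_add_sq_real, hio]; ring
      rw [this] at hnorm
      linarith
    intro p hp
    have h1 := hpy p hp
    have h2 := hpy t0 ht0
    have h3 : ‖p - z₀‖ ^ 2 = ‖t0 - z₀‖ ^ 2 := by rw [h1, h2]
    rw [dist_eq_norm, dist_eq_norm, ← Real.sqrt_sq (norm_nonneg (p - z₀)), h3,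
      Real.sqrt_sq (norm_nonneg _)]
  exact delaunay_grow Q hgen Q.card T hTQ ⟨t0, ht0⟩ z₀ hz₀A (dist t0 z₀) hdist hinv (by omega)

end AuxProof

theorem delaunay_general_position_realized (N : ℕ) (Q : Finset (Euc N))
    (hgen : ∀ S : Finset (Euc N), S ⊆ Q →
      S.card = Module.finrank ℝ (affineSpan ℝ (Q : Set (Euc N))).direction + 2 →
      ¬ ∃ (z : Euc N) (r : ℝ), z ∈ affineSpan ℝ (Q : Set (Euc N)) ∧ ∀ p ∈ S, dist p z = r) :
    (∀ σ : Finset (Euc N), IsDelaunay (Q : Set (Euc N)) σ → Nondegenerate σ) ∧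
    (∀ α β : Finset (Euc N), IsDelaunay (Q : Set (Euc N)) α → IsDelaunay (Q : Set (Euc N)) β →
      convexHull ℝ ((α ∩ β : Finset (Euc N)) : Set (Euc N)) =
        convexHull ℝ (α : Set (Euc N)) ∩ convexHull ℝ (β : Set (Euc N))) := by
  have sq_eq : ∀ a b : ℝ, 0 ≤ a → 0 ≤ b → a ^ 2 = b ^ 2 → a = b := by
    intro a b ha hb h
    rw [← Real.sqrt_sq ha, h, Real.sqrt_sq hb]
  constructor
  · rintro σ ⟨hσQ, z, r, hcirc, -⟩
    exact delaunay_indep Q hgen σ (Finset.coe_subset.mp hσQ) z r hcirc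
  · rintro α β ⟨hαQ, zα, rα, hcα, hEα⟩ ⟨hβQ, zβ, rβ, hcβ, hEβ⟩
    apply Set.Subset.antisymm
    · exact Set.subset_inter
        (convexHull_mono (Finset.coe_subset.mpr Finset.inter_subset_left))
        (convexHull_mono (Finset.coe_subset.mpr Finset.inter_subset_right))
    rintro x ⟨hxα, hxβ⟩
    rcases α.eq_empty_or_nonempty with rfl | hαne
    · simp at hxα
    rcases β.eq_empty_or_nonempty with rfl | hβne
    · simp at hxβ
    have hrα0 : 0 ≤ rα := by
      obtain ⟨p, hp⟩ := hαne; rw [← hcα p hp]; exact dist_nonneg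
    have hrβ0 : 0 ≤ rβ := by
      obtain ⟨p, hp⟩ := hβne; rw [← hcβ p hp]; exact dist_nonneg
    obtain ⟨w, hw0, hw1, hwx⟩ := Finset.mem_convexHull'.mp hxα
    obtain ⟨u, hu0, hu1, hux⟩ := Finset.mem_convexHull'.mp hxβ
    have key : ∀ (s : Finset (Euc N)) (ω : Euc N → ℝ), (∑ p ∈ s, ω p = 1) →
        (∑ p ∈ s, ω p • p = x) →
        ∑ p ∈ s, ω p * ((dist p zα) ^ 2 - rα ^ 2 - ((dist p zβ) ^ 2 - rβ ^ 2))
          = (dist x zα) ^ 2 - rα ^ 2 - ((dist x zβ) ^ 2 - rβ ^ 2) := by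
      intro s ω hω1 hωx
      have hterm : ∀ y : Euc N,
          (dist y zα) ^ 2 - rα ^ 2 - ((dist y zβ) ^ 2 - rβ ^ 2)
            = 2 * ⟪y, zβ - zα⟫ + (‖zα‖ ^ 2 - ‖zβ‖ ^ 2 - rα ^ 2 + rβ ^ 2) := by
        intro y
        rw [dist_eq_norm, dist_eq_norm, norm_sub_sq_real, norm_sub_sq_real, inner_sub_right]
        ring
      have hx : ⟪x, zβ - zα⟫ = ∑ p ∈ s, ω p * ⟪p, zβ - zα⟫ := by
        rw [← hωx, sum_inner]
        exact Finset.sum_congr rfl fun p _ => real_inner_smul_left _ _ _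
      have hL : ∀ p ∈ s, ω p * ((dist p zα) ^ 2 - rα ^ 2 - ((dist p zβ) ^ 2 - rβ ^ 2))
          = 2 * (ω p * ⟪p, zβ - zα⟫)
            + ω p * (‖zα‖ ^ 2 - ‖zβ‖ ^ 2 - rα ^ 2 + rβ ^ 2) :=
        fun p _ => by rw [hterm p]; ring
      rw [Finset.sum_congr rfl hL, Finset.sum_add_distrib, ← Finset.mul_sum,
        ← Finset.sum_mul, hω1, one_mul, hterm x, hx]
    have hα0 : ∀ p ∈ α, (dist p zα) ^ 2 - rα ^ 2 = 0 := fun p hp => by rw [hcα p hp]; ring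
    have hβ0 : ∀ q ∈ β, (dist q zβ) ^ 2 - rβ ^ 2 = 0 := fun q hq => by rw [hcβ q hq]; ring
    have hdβ : ∀ p ∈ α, 0 ≤ (dist p zβ) ^ 2 - rβ ^ 2 := by
      intro p hp
      have h := hEβ p (hαQ (Finset.mem_coe.mpr hp))
      nlinarith
    have hdα : ∀ q ∈ β, 0 ≤ (dist q zα) ^ 2 - rα ^ 2 := by
      intro q hq
      have h := hEα q (hβQ (Finset.mem_coe.mpr hq))
      nlinarith
    have hGα := key α w hw1 hwx
    have hGβ := key β u hu1 hux
    have hGα' : ∑ p ∈ α, w p * ((dist p zβ) ^ 2 - rβ ^ 2)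
        = -((dist x zα) ^ 2 - rα ^ 2 - ((dist x zβ) ^ 2 - rβ ^ 2)) := by
      rw [← hGα, ← Finset.sum_neg_distrib]
      exact Finset.sum_congr rfl fun p hp => by rw [hα0 p hp]; ring
    have hGβ' : ∑ q ∈ β, u q * ((dist q zα) ^ 2 - rα ^ 2)
        = (dist x zα) ^ 2 - rα ^ 2 - ((dist x zβ) ^ 2 - rβ ^ 2) := by
      rw [← hGβ]
      exact Finset.sum_congr rfl fun q hq => by rw [hβ0 q hq]; ring
    have hsumαnn : 0 ≤ ∑ p ∈ α, w p * ((dist p zβ) ^ 2 - rβ ^ 2) :=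
      Finset.sum_nonneg fun p hp => mul_nonneg (hw0 p hp) (hdβ p hp)
    have hsumβnn : 0 ≤ ∑ q ∈ β, u q * ((dist q zα) ^ 2 - rα ^ 2) :=
      Finset.sum_nonneg fun q hq => mul_nonneg (hu0 q hq) (hdα q hq)
    have hsumα0 : ∑ p ∈ α, w p * ((dist p zβ) ^ 2 - rβ ^ 2) = 0 := by
      rw [hGα'] at hsumαnn ⊢
      rw [hGβ'] at hsumβnn
      linarith
    have hsumβ0 : ∑ q ∈ β, u q * ((dist q zα) ^ 2 - rα ^ 2) = 0 := by
      rw [hGβ'] at hsumβnn ⊢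
      rw [hGα'] at hsumαnn
      linarith
    have hwβ : ∀ p ∈ α, w p ≠ 0 → dist p zβ = rβ := by
      intro p hp hwp
      have h := (Finset.sum_eq_zero_iff_of_nonneg
        (fun p hp => mul_nonneg (hw0 p hp) (hdβ p hp))).mp hsumα0 p hp
      have h2 : (dist p zβ) ^ 2 - rβ ^ 2 = 0 := by
        rcases mul_eq_zero.mp h with h' | h'
        · exact absurd h' hwp
        · exact h'
      exact sq_eq _ _ dist_nonneg hrβ0 (by linarith)
    have huα : ∀ q ∈ β, u q ≠ 0 → dist q zα = rα := by
      intro q hq huq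
      have h := (Finset.sum_eq_zero_iff_of_nonneg
        (fun q hq => mul_nonneg (hu0 q hq) (hdα q hq))).mp hsumβ0 q hq
      have h2 : (dist q zα) ^ 2 - rα ^ 2 = 0 := by
        rcases mul_eq_zero.mp h with h' | h'
        · exact absurd h' huq
        · exact h'
      exact sq_eq _ _ dist_nonneg hrα0 (by linarith)
    -- The union of the supports lies on the sphere (zα, rα), hence is affinely independent.
    set Af : Finset (Euc N) := α.filter (fun p => w p ≠ 0) with hAf
    set Bf : Finset (Euc N) := β.filter (fun q => u q ≠ 0) with hBf
    set T : Finset (Euc N) := Af ∪ Bf with hT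
    have hTQ : T ⊆ Q := Finset.union_subset
      ((Finset.filter_subset _ _).trans (Finset.coe_subset.mp hαQ))
      ((Finset.filter_subset _ _).trans (Finset.coe_subset.mp hβQ))
    have hTsph : ∀ t ∈ T, dist t zα = rα := by
      intro t ht
      rcases Finset.mem_union.mp ht with h | h
      · exact hcα t (Finset.filter_subset _ _ h)
      · obtain ⟨h1, h2⟩ := Finset.mem_filter.mp h
        exact huα t h1 h2
    have hind := delaunay_indep Q hgen T hTQ zα rα hTsph
    set w' : Euc N → ℝ := fun y => if y ∈ α then w y else 0 with hw'
    set u' : Euc N → ℝ := fun y => if y ∈ β then u y else 0 with hu'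
    have hw'α : ∀ y, y ∈ α → y ∉ Af → w' y = 0 := by
      intro y hy hnAf
      have : ¬ (w y ≠ 0) := fun hne => hnAf (Finset.mem_filter.mpr ⟨hy, hne⟩)
      simp only [hw', if_pos hy]
      exact not_not.mp this
    have hw'0 : ∀ y, y ∉ Af → w' y = 0 := by
      intro y hnAf
      by_cases hy : y ∈ α
      · exact hw'α y hy hnAf
      · simp only [hw', if_neg hy]
    have hu'0 : ∀ y, y ∉ Bf → u' y = 0 := by
      intro y hnBf
      by_cases hy : y ∈ β
      · have : ¬ (u y ≠ 0) := fun hne => hnBf (Finset.mem_filter.mpr ⟨hy, hne⟩)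
        simp only [hu', if_pos hy]
        exact not_not.mp this
      · simp only [hu', if_neg hy]
    have hsumw'A : ∀ (s : Finset (Euc N)), Af ⊆ s →
        (∑ y ∈ s, w' y = 1 ∧ ∑ y ∈ s, w' y • y = x) := by
      intro s hAfs
      have e1 : ∑ y ∈ s, w' y = ∑ y ∈ Af, w' y :=
        (Finset.sum_subset hAfs (fun y hy hny => hw'0 y hny)).symm
      have e1' : ∑ y ∈ s, w' y • y = ∑ y ∈ Af, w' y • y :=
        (Finset.sum_subset hAfs (fun y hy hny => by rw [hw'0 y hny, zero_smul])).symm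
      have e2 : ∑ y ∈ Af, w' y = ∑ y ∈ Af, w y :=
        Finset.sum_congr rfl fun y hy => by
          simp only [hw', if_pos (Finset.mem_filter.mp hy).1]
      have e2' : ∑ y ∈ Af, w' y • y = ∑ y ∈ Af, w y • y :=
        Finset.sum_congr rfl fun y hy => by
          simp only [hw', if_pos (Finset.mem_filter.mp hy).1]
      have e3 : ∑ y ∈ Af, w y = ∑ p ∈ α, w p :=
        Finset.sum_subset (Finset.filter_subset _ _) (fun y hy hny => by
          by_contra hne
          exact hny (Finset.mem_filter.mpr ⟨hy, hne⟩))
      have e3' : ∑ y ∈ Af, w y • y = ∑ p ∈ α, w p • p :=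
        Finset.sum_subset (Finset.filter_subset _ _) (fun y hy hny => by
          have : w y = 0 := by
            by_contra hne
            exact hny (Finset.mem_filter.mpr ⟨hy, hne⟩)
          rw [this, zero_smul])
      exact ⟨by rw [e1, e2, e3, hw1], by rw [e1', e2', e3', hwx]⟩
    have hsumu'B : ∀ (s : Finset (Euc N)), Bf ⊆ s →
        (∑ y ∈ s, u' y = 1 ∧ ∑ y ∈ s, u' y • y = x) := by
      intro s hBfs
      have e1 : ∑ y ∈ s, u' y = ∑ y ∈ Bf, u' y :=
        (Finset.sum_subset hBfs (fun y hy hny => hu'0 y hny)).symm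
      have e1' : ∑ y ∈ s, u' y • y = ∑ y ∈ Bf, u' y • y :=
        (Finset.sum_subset hBfs (fun y hy hny => by rw [hu'0 y hny, zero_smul])).symm
      have e2 : ∑ y ∈ Bf, u' y = ∑ y ∈ Bf, u y :=
        Finset.sum_congr rfl fun y hy => by
          simp only [hu', if_pos (Finset.mem_filter.mp hy).1]
      have e2' : ∑ y ∈ Bf, u' y • y = ∑ y ∈ Bf, u y • y :=
        Finset.sum_congr rfl fun y hy => by
          simp only [hu', if_pos (Finset.mem_filter.mp hy).1]
      have e3 : ∑ y ∈ Bf, u y = ∑ p ∈ β, u p :=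
        Finset.sum_subset (Finset.filter_subset _ _) (fun y hy hny => by
          by_contra hne
          exact hny (Finset.mem_filter.mpr ⟨hy, hne⟩))
      have e3' : ∑ y ∈ Bf, u y • y = ∑ p ∈ β, u p • p :=
        Finset.sum_subset (Finset.filter_subset _ _) (fun y hy hny => by
          have : u y = 0 := by
            by_contra hne
            exact hny (Finset.mem_filter.mpr ⟨hy, hne⟩)
          rw [this, zero_smul])
      exact ⟨by rw [e1, e2, e3, hu1], by rw [e1', e2', e3', hux]⟩
    obtain ⟨hTw1, hTwx⟩ := hsumw'A T Finset.subset_union_left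
    obtain ⟨hTu1, hTux⟩ := hsumu'B T Finset.subset_union_right
    have hd0 : ∑ t ∈ Finset.univ, (fun t : {y // y ∈ T} => w' ↑t - u' ↑t) t = 0 := by
      rw [Finset.univ_eq_attach, Finset.sum_sub_distrib, Finset.sum_attach T w',
        Finset.sum_attach T u', hTw1, hTu1, sub_self]
    have hdvsub : Finset.univ.weightedVSub (fun p : {y // y ∈ T} => (p : Euc N))
        (fun t : {y // y ∈ T} => w' ↑t - u' ↑t) = 0 := by
      rw [Finset.weightedVSub_eq_weightedVSubOfPoint_of_sum_eq_zero _ _ _ hd0 (0 : Euc N),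
        Finset.weightedVSubOfPoint_apply]
      simp only [vsub_eq_sub, sub_zero]
      have hsplit : ∀ t ∈ (Finset.univ : Finset {y // y ∈ T}),
          (w' ↑t - u' ↑t) • ((fun p : {y // y ∈ T} => (p : Euc N)) t)
            = (fun y => w' y • y) ↑t - (fun y => u' y • y) ↑t :=
        fun t _ => sub_smul _ _ _
      rw [Finset.sum_congr rfl hsplit, Finset.sum_sub_distrib, Finset.univ_eq_attach,
        Finset.sum_attach T (fun y => w' y • y), Finset.sum_attach T (fun y => u' y • y),
        hTwx, hTux, sub_self]
    have hkey := hind Finset.univ (fun t : {y // y ∈ T} => w' ↑t - u' ↑t) hd0 hdvsub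
    have hsupp : Af ⊆ α ∩ β := by
      intro p hp
      have hpT : p ∈ T := Finset.subset_union_left hp
      have h := hkey ⟨p, hpT⟩ (Finset.mem_univ _)
      obtain ⟨hpα, hwp⟩ := Finset.mem_filter.mp hp
      have heq : w' p = u' p := by
        have h' : w' p - u' p = 0 := h
        linarith
      have hw'p : w' p = w p := by simp only [hw', if_pos hpα]
      have hpβ : p ∈ β := by
        by_contra hc
        rw [heq] at hw'p
        simp only [hu', if_neg hc] at hw'p
        exact hwp hw'p.symm
      exact Finset.mem_inter.mpr ⟨hpα, hpβ⟩
    apply Finset.mem_convexHull'.mpr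
    refine ⟨w', fun y _ => ?_, (hsumw'A (α ∩ β) hsupp).1, (hsumw'A (α ∩ β) hsupp).2⟩
    simp only [hw']
    split_ifs with h
    · exact hw0 y h
    · exact le_rfl
end

section
/- Let X ⊆ R^N be a d-dimensional affine space, σ ⊆ X a non-degenerate d-simplex, and x ∈ X such that |‖x−a‖² − ‖x−a'‖²| ≤ ξ² for all vertices a, a' of σ. Then the circumcenter Z(σ) of σ satisfies ‖Z(σ) − x‖ ≤ d·ξ²/(2·height(σ)). -/
open Metric Set
open scoped Classical

open scoped RealInnerProductSpace

namespace AlmostCircum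

variable {N : ℕ}

lemma projA_mem (H : AffineSubspace ℝ (Euc N)) (hH : (H : Set (Euc N)).Nonempty) (x : Euc N) :
    projA H x ∈ H := by
  rw [projA, dif_pos hH]
  rw [add_comm]
  exact AffineSubspace.vadd_mem_of_mem_direction (Submodule.coe_mem _) hH.choose_spec

lemma projA_sub_orth (H : AffineSubspace ℝ (Euc N)) (hH : (H : Set (Euc N)).Nonempty) (x : Euc N) :
    x - projA H x ∈ H.directionᗮ := by
  rw [projA, dif_pos hH]
  have : x - (hH.choose + ↑(Submodule.orthogonalProjectionOnto H.direction (x - hH.choose)))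
      = (x - hH.choose) - ↑(Submodule.orthogonalProjectionOnto H.direction (x - hH.choose)) := by abel
  rw [this]
  exact Submodule.sub_starProjection_mem_orthogonal (K := H.direction) _

lemma infDist_eq_projA (H : AffineSubspace ℝ (Euc N)) (hH : (H : Set (Euc N)).Nonempty)
    (x : Euc N) : Metric.infDist x (H : Set (Euc N)) = ‖x - projA H x‖ := by
  refine le_antisymm ?_ ?_
  · have h1 : Metric.infDist x (H : Set (Euc N)) ≤ dist x (projA H x) :=
      Metric.infDist_le_dist_of_mem (projA_mem H hH x)
    rwa [dist_eq_norm] at h1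
  · refine le_of_not_gt fun hlt => ?_
    obtain ⟨y, hy, hdy⟩ := (Metric.infDist_lt_iff hH).1 hlt
    have hdir : projA H x - y ∈ H.direction := by
      have := AffineSubspace.vsub_mem_direction (projA_mem H hH x) hy
      simpa [vsub_eq_sub] using this
    have horth : ⟪x - projA H x, projA H x - y⟫ = 0 :=
      (Submodule.mem_orthogonal' _ _).1 (projA_sub_orth H hH x) _ hdir
    have hxy : x - y = (x - projA H x) + (projA H x - y) := by abel
    have hsq : ‖x - y‖ ^ 2 = ‖x - projA H x‖ ^ 2 + ‖projA H x - y‖ ^ 2 := by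
      rw [hxy, norm_add_sq_real, horth]; ring
    have h1 : ‖x - projA H x‖ ≤ ‖x - y‖ := by
      nlinarith [norm_nonneg (x - y), norm_nonneg (x - projA H x), sq_nonneg (‖projA H x - y‖)]
    rw [dist_eq_norm] at hdy
    linarith

end AlmostCircum


theorem almost_circumcenter_location (N d : ℕ) (X : AffineSubspace ℝ (Euc N))
    (hX : Module.finrank ℝ X.direction = d)
    (σ : Finset (Euc N)) (hσX : (σ : Set (Euc N)) ⊆ (X : Set (Euc N)))
    (hσ : Nondegenerate σ) (hcard : σ.card = d + 1)
    (x : Euc N) (hx : x ∈ X) (ξ : ℝ)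
    (hxi : ∀ a ∈ σ, ∀ a' ∈ σ, |dist x a ^ 2 - dist x a' ^ 2| ≤ ξ ^ 2)
    (z : Euc N) (r : ℝ) (hz : z ∈ affineSpan ℝ (σ : Set (Euc N))) (hzr : IsCircum σ z r) :
    dist z x ≤ d * ξ ^ 2 / (2 * height σ) := by
  classical
  rcases Nat.eq_zero_or_pos d with hd0 | hd
  · subst hd0
    obtain ⟨a, ha⟩ := Finset.card_eq_one.mp hcard
    subst ha
    have hza : z = a := by
      simpa [AffineSubspace.mem_affineSpan_singleton] using hz
    have hXdir : X.direction = ⊥ := Submodule.finrank_eq_zero.mp hX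
    have hax : a = x := by
      have hmem : a -ᵥ x ∈ X.direction :=
        AffineSubspace.vsub_mem_direction (hσX (by simp)) hx
      rw [hXdir, Submodule.mem_bot] at hmem
      simpa [vsub_eq_sub, sub_eq_zero] using hmem
    simp [hza, hax]
  -- main case d ≥ 1
  have hσne : σ.Nonempty := Finset.card_pos.mp (by omega)
  obtain ⟨b₀, hb₀⟩ := hσne
  set A : Euc N → AffineSubspace ℝ (Euc N) :=
    fun v => affineSpan ℝ ((σ.erase v : Finset (Euc N)) : Set (Euc N)) with hA
  have hAne : ∀ v ∈ σ, ((A v : Set (Euc N))).Nonempty := by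
    intro v hv
    have hne : (σ.erase v).Nonempty := Finset.card_pos.mp (by
      rw [Finset.card_erase_of_mem hv, hcard]; omega)
    obtain ⟨p, hp⟩ := hne
    exact ⟨p, subset_affineSpan ℝ _ hp⟩
  set m : Euc N → Euc N := fun v => v - projA (A v) v with hm
  have hmemA : ∀ v : Euc N, ∀ p ∈ σ.erase v, p ∈ A v := fun v p hp =>
    subset_affineSpan ℝ _ hp
  have hm_orthdir : ∀ v ∈ σ, ∀ u ∈ (A v).direction, ⟪m v, u⟫ = 0 := by
    intro v hv u hu
    exact (Submodule.mem_orthogonal' _ _).1 (AlmostCircum.projA_sub_orth (A v) (hAne v hv) v) u hu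
  have hm_orth : ∀ v ∈ σ, ∀ p ∈ σ.erase v, ∀ q ∈ σ.erase v, ⟪m v, p - q⟫ = 0 := by
    intro v hv p hp q hq
    refine hm_orthdir v hv _ ?_
    have := AffineSubspace.vsub_mem_direction (hmemA v p hp) (hmemA v q hq)
    simpa [vsub_eq_sub] using this
  have hm_self : ∀ v ∈ σ, ∀ q ∈ σ.erase v, ⟪m v, v - q⟫ = ‖m v‖ ^ 2 := by
    intro v hv q hq
    have hsplit : v - q = m v + (projA (A v) v - q) := by simp only [hm]; abel
    have hdir : projA (A v) v - q ∈ (A v).direction := by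
      have := AffineSubspace.vsub_mem_direction
        (AlmostCircum.projA_mem (A v) (hAne v hv) v) (hmemA v q hq)
      simpa [vsub_eq_sub] using this
    rw [hsplit, inner_add_right, hm_orthdir v hv _ hdir, real_inner_self_eq_norm_sq, add_zero]
  have hmdist : ∀ v ∈ σ, Metric.infDist v (A v : Set (Euc N)) = ‖m v‖ := fun v hv =>
    AlmostCircum.infDist_eq_projA (A v) (hAne v hv) v
  have hnotmem : ∀ v ∈ σ, v ∉ A v := by
    intro v hv hvmem
    have h := hσ.notMem_affineSpan_diff ⟨v, hv⟩ Set.univ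
    apply h
    have himg : (fun p : σ => (p : Euc N)) '' (Set.univ \ {⟨v, hv⟩}) =
        ((σ.erase v : Finset (Euc N)) : Set (Euc N)) := by
      ext y
      simp only [Set.mem_image, Set.mem_diff, Set.mem_univ, Set.mem_singleton_iff, true_and,
        Finset.coe_erase, Set.mem_diff, Finset.mem_coe, Set.mem_singleton_iff]
      constructor
      · rintro ⟨⟨p, hpσ⟩, hpne, rfl⟩
        exact ⟨hpσ, fun h => hpne (by simpa [Subtype.ext_iff] using h)⟩
      · rintro ⟨hyσ, hyv⟩
        exact ⟨⟨y, hyσ⟩, fun h => hyv (by simpa [Subtype.ext_iff] using h), rfl⟩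
    rw [himg]
    exact hvmem
  have hmpos : ∀ v ∈ σ, 0 < ‖m v‖ := by
    intro v hv
    rw [← hmdist v hv]
    exact ((AffineSubspace.closed_of_finiteDimensional (A v)).notMem_iff_infDist_pos
      (hAne v hv)).1 (hnotmem v hv)
  -- height facts
  have hheight : height σ =
      sInf ((fun v => Metric.infDist v (A v : Set (Euc N))) '' (σ : Set (Euc N))) := rfl
  have hSfin : ((fun v => Metric.infDist v (A v : Set (Euc N))) '' (σ : Set (Euc N))).Finite :=
    (σ.finite_toSet).image _
  have hSne : ((fun v => Metric.infDist v (A v : Set (Euc N))) '' (σ : Set (Euc N))).Nonempty :=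
    ⟨_, Set.mem_image_of_mem _ hb₀⟩
  have hhpos : 0 < height σ := by
    rw [hheight]
    obtain ⟨v, hv, hveq⟩ := hSne.csInf_mem hSfin
    rw [← hveq]
    have hv' := Finset.mem_coe.mp hv
    simpa only [hmdist v hv'] using hmpos v hv'
  have hhle : ∀ v ∈ σ, height σ ≤ ‖m v‖ := by
    intro v hv
    rw [← hmdist v hv, hheight]
    exact csInf_le hSfin.bddBelow (Set.mem_image_of_mem _ hv)
  -- the vector w
  have hspan : vectorSpan ℝ (σ : Set (Euc N)) = X.direction := by
    have hle : vectorSpan ℝ (σ : Set (Euc N)) ≤ X.direction := by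
      rw [← direction_affineSpan]
      exact AffineSubspace.direction_le (affineSpan_le.mpr hσX)
    have hfr : Module.finrank ℝ (vectorSpan ℝ (σ : Set (Euc N))) = d := by
      have hc : Fintype.card σ = d + 1 := by rw [Fintype.card_coe, hcard]
      have h2 := hσ.finrank_vectorSpan hc
      rwa [show Set.range (fun p : σ => (p : Euc N)) = (σ : Set (Euc N)) by
        ext y; simp] at h2
    exact Submodule.eq_of_le_of_finrank_le hle (by rw [hfr, hX])
  set w : Euc N := z - x with hwdef
  have hzX : z ∈ X := (affineSpan_le.mpr hσX) hz
  have hwmem : w ∈ vectorSpan ℝ (σ : Set (Euc N)) := by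
    rw [hspan]
    have := AffineSubspace.vsub_mem_direction hzX hx
    simpa [vsub_eq_sub] using this
  -- inner product bound from circumcenter
  have hinner : ∀ a ∈ σ, ∀ a' ∈ σ, |⟪w, a - a'⟫| ≤ ξ ^ 2 / 2 := by
    intro a ha a' ha'
    have e1 : dist x a ^ 2 = ‖x - z‖ ^ 2 - 2 * ⟪x - z, a - z⟫ + ‖a - z‖ ^ 2 := by
      rw [dist_eq_norm, show x - a = (x - z) - (a - z) by abel, norm_sub_sq_real]
    have e2 : dist x a' ^ 2 = ‖x - z‖ ^ 2 - 2 * ⟪x - z, a' - z⟫ + ‖a' - z‖ ^ 2 := by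
      rw [dist_eq_norm, show x - a' = (x - z) - (a' - z) by abel, norm_sub_sq_real]
    have hr1 : ‖a - z‖ = r := by rw [← dist_eq_norm]; exact hzr a ha
    have hr2 : ‖a' - z‖ = r := by rw [← dist_eq_norm]; exact hzr a' ha'
    have e3 : ⟪w, a - a'⟫ = ⟪x - z, a' - z⟫ - ⟪x - z, a - z⟫ := by
      have hw' : w = -(x - z) := by rw [hwdef]; abel
      have ha'' : a - a' = -((a' - z) - (a - z)) := by abel
      rw [hw', ha'', inner_neg_neg, inner_sub_right]
    have hd : dist x a ^ 2 - dist x a' ^ 2 = 2 * ⟪w, a - a'⟫ := by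
      rw [e1, e2, e3, hr1, hr2]; ring
    have := hxi a ha a' ha'
    rw [hd, abs_mul, abs_two] at this
    linarith [abs_nonneg (⟪w, a - a'⟫)]
  -- the reproducing identity
  set F : Euc N →ₗ[ℝ] Euc N :=
    ∑ v ∈ σ.erase b₀,
      LinearMap.smulRight ((innerSL ℝ (m v)).toLinearMap) ((‖m v‖ ^ 2)⁻¹ • (v - b₀)) with hF
  have hFapply : ∀ u, F u = ∑ v ∈ σ.erase b₀, ⟪m v, u⟫ • ((‖m v‖ ^ 2)⁻¹ • (v - b₀)) := by
    intro u
    rw [hF, LinearMap.sum_apply]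
    refine Finset.sum_congr rfl fun v _ => ?_
    simp [LinearMap.smulRight_apply]
  have hFid : ∀ u ∈ vectorSpan ℝ (σ : Set (Euc N)), F u = u := by
    intro u hu
    rw [vectorSpan_eq_span_vsub_set_right ℝ (Finset.mem_coe.mpr hb₀)] at hu
    induction hu using Submodule.span_induction with
    | mem y hy =>
      obtain ⟨p, hp, rfl⟩ := hy
      have hpσ : p ∈ σ := Finset.mem_coe.mp hp
      show F (p -ᵥ b₀) = p -ᵥ b₀
      rw [vsub_eq_sub]
      by_cases hpb : p = b₀
      · subst hpb
        simp [hFapply]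
      · rw [hFapply, Finset.sum_eq_single p]
        · have hb₀e : b₀ ∈ σ.erase p := Finset.mem_erase.mpr ⟨fun h => hpb h.symm, hb₀⟩
          rw [hm_self p hpσ b₀ hb₀e, smul_smul,
            mul_inv_cancel₀ (pow_ne_zero 2 (hmpos p hpσ).ne'), one_smul]
        · intro v hvmem hvp
          have hvσ : v ∈ σ := Finset.mem_of_mem_erase hvmem
          have hvb : v ≠ b₀ := (Finset.mem_erase.mp hvmem).1
          have hpe : p ∈ σ.erase v := Finset.mem_erase.mpr ⟨fun h => hvp h.symm, hpσ⟩
          have hbe : b₀ ∈ σ.erase v := Finset.mem_erase.mpr ⟨fun h => hvb h.symm, hb₀⟩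
          rw [hm_orth v hvσ p hpe b₀ hbe, zero_smul]
        · intro hnot
          exact absurd (Finset.mem_erase.mpr ⟨hpb, hpσ⟩) hnot
    | zero => simp
    | add u₁ u₂ _ _ h1 h2 => rw [map_add, h1, h2]
    | smul c u₁ _ h1 => rw [map_smul, h1]
  -- conclude
  have hww : ‖w‖ ^ 2 = ∑ v ∈ σ.erase b₀,
      (⟪m v, w⟫ * (‖m v‖ ^ 2)⁻¹) * ⟪w, v - b₀⟫ := by
    have h0 : ‖w‖ ^ 2 = ⟪w, F w⟫ := by
      rw [hFid w hwmem, real_inner_self_eq_norm_sq]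
    rw [h0, hFapply, inner_sum]
    refine Finset.sum_congr rfl fun v _ => ?_
    rw [real_inner_smul_right, real_inner_smul_right]; ring
  have hbound : ∀ v ∈ σ.erase b₀,
      (⟪m v, w⟫ * (‖m v‖ ^ 2)⁻¹) * ⟪w, v - b₀⟫ ≤ (‖w‖ / height σ) * (ξ ^ 2 / 2) := by
    intro v hv
    have hvσ : v ∈ σ := Finset.mem_of_mem_erase hv
    have h1 : |⟪m v, w⟫| ≤ ‖m v‖ * ‖w‖ := abs_real_inner_le_norm _ _
    have h2 : |⟪w, v - b₀⟫| ≤ ξ ^ 2 / 2 := hinner v hvσ b₀ hb₀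
    have hmv : 0 < ‖m v‖ := hmpos v hvσ
    calc (⟪m v, w⟫ * (‖m v‖ ^ 2)⁻¹) * ⟪w, v - b₀⟫
        ≤ |(⟪m v, w⟫ * (‖m v‖ ^ 2)⁻¹) * ⟪w, v - b₀⟫| := le_abs_self _
      _ = |⟪m v, w⟫| * (‖m v‖ ^ 2)⁻¹ * |⟪w, v - b₀⟫| := by
          rw [abs_mul, abs_mul, abs_of_nonneg (by positivity : (0:ℝ) ≤ (‖m v‖ ^ 2)⁻¹)]
      _ ≤ (‖m v‖ * ‖w‖) * (‖m v‖ ^ 2)⁻¹ * (ξ ^ 2 / 2) := by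
          have hA : (0:ℝ) ≤ (‖m v‖ ^ 2)⁻¹ := by positivity
          have := mul_le_mul_of_nonneg_right h1 hA
          exact mul_le_mul this h2 (abs_nonneg _) (by positivity)
      _ = (‖w‖ / ‖m v‖) * (ξ ^ 2 / 2) := by
          field_simp
      _ ≤ (‖w‖ / height σ) * (ξ ^ 2 / 2) := by
          have : ‖w‖ / ‖m v‖ ≤ ‖w‖ / height σ :=
            div_le_div_of_nonneg_left (norm_nonneg w) hhpos (hhle v hvσ)
          exact mul_le_mul_of_nonneg_right this (by positivity)
  have hcardE : (σ.erase b₀).card = d := by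
    rw [Finset.card_erase_of_mem hb₀, hcard]
    omega
  have hsum : ‖w‖ ^ 2 ≤ d * ((‖w‖ / height σ) * (ξ ^ 2 / 2)) := by
    rw [hww]
    calc ∑ v ∈ σ.erase b₀, (⟪m v, w⟫ * (‖m v‖ ^ 2)⁻¹) * ⟪w, v - b₀⟫
        ≤ ∑ _v ∈ σ.erase b₀, (‖w‖ / height σ) * (ξ ^ 2 / 2) := Finset.sum_le_sum hbound
      _ = d * ((‖w‖ / height σ) * (ξ ^ 2 / 2)) := by
          rw [Finset.sum_const, hcardE, nsmul_eq_mul]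
  have hdistw : dist z x = ‖w‖ := by rw [dist_eq_norm]
  rcases eq_or_lt_of_le (norm_nonneg w) with h0 | h0
  · rw [hdistw, ← h0]
    apply div_nonneg (by positivity)
    linarith
  · rw [hdistw]
    have hkey : ‖w‖ * ‖w‖ ≤ ‖w‖ * (d * ξ ^ 2 / (2 * height σ)) := by
      have heq : (d : ℝ) * ((‖w‖ / height σ) * (ξ ^ 2 / 2)) =
          ‖w‖ * (d * ξ ^ 2 / (2 * height σ)) := by
        field_simp
      calc ‖w‖ * ‖w‖ = ‖w‖ ^ 2 := by ring
        _ ≤ d * ((‖w‖ / height σ) * (ξ ^ 2 / 2)) := hsum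
        _ = ‖w‖ * (d * ξ ^ 2 / (2 * height σ)) := heq
    exact le_of_mul_le_mul_left hkey h0
end

section
/- Let σ ⊆ R^N be a d-simplex and H a d-dimensional affine space with ∠(Aff σ, H) < π/2. Then the radius r_σ of the smallest enclosing ball of σ satisfies r_σ ≤ r_{π_H(σ)} / cos ∠(Aff σ, H), where r_{π_H(σ)} is the radius of the smallest enclosing ball of the projected simplex π_H(σ). -/
open Metric Set
open scoped Classical

section SebAux
open scoped RealInnerProductSpace
variable {N : ℕ}

lemma projA_eq (H : AffineSubspace ℝ (Euc N)) (hne : (H : Set (Euc N)).Nonempty) (x : Euc N) :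
    projA H x = hne.choose + (Submodule.orthogonalProjectionOnto H.direction (x - hne.choose) : Euc N) := by
  rw [projA, dif_pos hne]

lemma projA_mem (H : AffineSubspace ℝ (Euc N)) (hne : (H : Set (Euc N)).Nonempty) (x : Euc N) :
    projA H x ∈ H := by
  rw [projA_eq H hne]
  have h0 : hne.choose ∈ H := hne.choose_spec
  have := AffineSubspace.vadd_mem_of_mem_direction
    (Submodule.orthogonalProjectionOnto H.direction (x - hne.choose)).2 h0
  simpa [vadd_eq_add, add_comm] using this

lemma projA_eq_self (H : AffineSubspace ℝ (Euc N)) (hne : (H : Set (Euc N)).Nonempty)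
    {y : Euc N} (hy : y ∈ H) : projA H y = y := by
  rw [projA_eq H hne]
  have h0 : hne.choose ∈ H := hne.choose_spec
  have hmem : y - hne.choose ∈ H.direction := by
    simpa [vsub_eq_sub] using AffineSubspace.vsub_mem_direction hy h0
  rw [← Submodule.starProjection_apply, Submodule.starProjection_eq_self_iff.2 hmem]
  abel

lemma projA_sub (H : AffineSubspace ℝ (Euc N)) (hne : (H : Set (Euc N)).Nonempty) (x y : Euc N) :
    projA H x - projA H y = (Submodule.orthogonalProjectionOnto H.direction (x - y) : Euc N) := by
  rw [projA_eq H hne, projA_eq H hne]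
  have h : (Submodule.orthogonalProjectionOnto H.direction (x - y) : Euc N)
      = (Submodule.orthogonalProjectionOnto H.direction (x - hne.choose) : Euc N)
        - (Submodule.orthogonalProjectionOnto H.direction (y - hne.choose) : Euc N) := by
    rw [← Submodule.coe_sub, ← map_sub]
    congr 2
    abel
  rw [h]
  abel

lemma norm_proj_le (V : Submodule ℝ (Euc N)) (z : Euc N) :
    ‖(Submodule.orthogonalProjectionOnto V z : Euc N)‖ ≤ ‖z‖ := by
  have h := ContinuousLinearMap.le_opNorm (Submodule.orthogonalProjectionOnto V) z
  have h2 := Submodule.orthogonalProjectionOnto_norm_le V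
  calc ‖(Submodule.orthogonalProjectionOnto V z : Euc N)‖ = ‖Submodule.orthogonalProjectionOnto V z‖ := rfl
    _ ≤ ‖Submodule.orthogonalProjectionOnto V‖ * ‖z‖ := h
    _ ≤ 1 * ‖z‖ := by
        apply mul_le_mul_of_nonneg_right h2 (norm_nonneg z)
    _ = ‖z‖ := one_mul _

lemma projA_dist_le (H : AffineSubspace ℝ (Euc N)) (hne : (H : Set (Euc N)).Nonempty)
    {y : Euc N} (hy : y ∈ H) (x : Euc N) : dist (projA H x) y ≤ dist x y := by
  have : projA H x - y = (Submodule.orthogonalProjectionOnto H.direction (x - y) : Euc N) := by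
    conv_lhs => rw [← projA_eq_self H hne hy]
    exact projA_sub H hne x y
  rw [dist_eq_norm, dist_eq_norm, this]
  exact norm_proj_le _ _

lemma exists_unit (V : Submodule ℝ (Euc N)) (hV : V ≠ ⊥) : ∃ e ∈ V, ‖e‖ = 1 := by
  obtain ⟨x, hx, hx0⟩ := Submodule.exists_mem_ne_zero_of_ne_bot hV
  refine ⟨‖x‖⁻¹ • x, V.smul_mem _ hx, ?_⟩
  rw [norm_smul, norm_inv, norm_norm, inv_mul_cancel₀ (norm_ne_zero_iff.2 hx0)]

lemma subAngle_nonneg (V₀ V₁ : Submodule ℝ (Euc N)) (h0 : V₀ ≠ ⊥) (h1 : V₁ ≠ ⊥) :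
    0 ≤ subAngle V₀ V₁ := by
  obtain ⟨u, hu, hu1⟩ := exists_unit V₀ h0
  obtain ⟨e, he, he1⟩ := exists_unit V₁ h1
  have hBne : {b | ∃ v₁ ∈ V₁, ‖v₁‖ = 1 ∧ b = InnerProductGeometry.angle u v₁}.Nonempty :=
    ⟨_, e, he, he1, rfl⟩
  have h2 : (0:ℝ) ≤ sInf {b | ∃ v₁ ∈ V₁, ‖v₁‖ = 1 ∧ b = InnerProductGeometry.angle u v₁} :=
    le_csInf hBne (by rintro b ⟨v₁, -, -, rfl⟩; exact InnerProductGeometry.angle_nonneg _ _)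
  refine le_trans h2 (le_csSup ?_ ⟨u, hu, hu1, rfl⟩)
  refine ⟨Real.pi, ?_⟩
  rintro a ⟨v₀, hv₀, hv₀1, rfl⟩
  have hBne' : {b | ∃ v₁ ∈ V₁, ‖v₁‖ = 1 ∧ b = InnerProductGeometry.angle v₀ v₁}.Nonempty :=
    ⟨_, e, he, he1, rfl⟩
  have hbb : BddBelow {b | ∃ v₁ ∈ V₁, ‖v₁‖ = 1 ∧ b = InnerProductGeometry.angle v₀ v₁} :=
    ⟨0, by rintro b ⟨v₁, -, -, rfl⟩; exact InnerProductGeometry.angle_nonneg _ _⟩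
  exact le_trans (csInf_le hbb ⟨e, he, he1, rfl⟩) (InnerProductGeometry.angle_le_pi _ _)

lemma arccos_antitone {x y : ℝ} (hxy : x ≤ y) : Real.arccos y ≤ Real.arccos x := by
  unfold Real.arccos
  have := Real.monotone_arcsin hxy
  linarith

lemma subAngle_key (V₀ V₁ : Submodule ℝ (Euc N)) (h1 : V₁ ≠ ⊥)
    (hlt : subAngle V₀ V₁ < Real.pi / 2) {v : Euc N} (hv : v ∈ V₀) :
    Real.cos (subAngle V₀ V₁) * ‖v‖ ≤ ‖(Submodule.orthogonalProjectionOnto V₁ v : Euc N)‖ := by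
  obtain ⟨e, he, he1⟩ := exists_unit V₁ h1
  rcases eq_or_ne v 0 with rfl | hv0
  · simp
  set u : Euc N := ‖v‖⁻¹ • v with hu_def
  have hu : u ∈ V₀ := V₀.smul_mem _ hv
  have hu1 : ‖u‖ = 1 := by
    rw [hu_def, norm_smul, norm_inv, norm_norm, inv_mul_cancel₀ (norm_ne_zero_iff.2 hv0)]
  set B := {b | ∃ v₁ ∈ V₁, ‖v₁‖ = 1 ∧ b = InnerProductGeometry.angle u v₁} with hB
  have hBne : B.Nonempty := ⟨_, e, he, he1, rfl⟩
  have hPu1 : ‖(Submodule.orthogonalProjectionOnto V₁ u : Euc N)‖ ≤ 1 := by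
    calc ‖(Submodule.orthogonalProjectionOnto V₁ u : Euc N)‖ ≤ ‖u‖ := norm_proj_le _ _
      _ = 1 := hu1
  -- arccos ‖P u‖ is a lower bound for B
  have h1b : Real.arccos ‖(Submodule.orthogonalProjectionOnto V₁ u : Euc N)‖ ≤ sInf B := by
    refine le_csInf hBne ?_
    rintro b ⟨v₁, hv₁, hv₁1, rfl⟩
    have hang : InnerProductGeometry.angle u v₁ = Real.arccos ⟪u, v₁⟫ := by
      rw [InnerProductGeometry.angle, hu1, hv₁1]; norm_num
    rw [hang]
    apply arccos_antitone
    · have hz : ⟪u - (Submodule.orthogonalProjectionOnto V₁ u : Euc N), v₁⟫ = 0 :=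
        Submodule.starProjection_inner_eq_zero u v₁ hv₁
      have : ⟪u, v₁⟫ = ⟪(Submodule.orthogonalProjectionOnto V₁ u : Euc N), v₁⟫ := by
        have := inner_sub_left (𝕜 := ℝ) u ((Submodule.orthogonalProjectionOnto V₁ u : Euc N)) v₁
        rw [this] at hz
        linarith
      rw [this]
      calc ⟪(Submodule.orthogonalProjectionOnto V₁ u : Euc N), v₁⟫
          ≤ ‖(Submodule.orthogonalProjectionOnto V₁ u : Euc N)‖ * ‖v₁‖ := real_inner_le_norm _ _
        _ = ‖(Submodule.orthogonalProjectionOnto V₁ u : Euc N)‖ := by rw [hv₁1, mul_one]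
  have h2 : sInf B ≤ subAngle V₀ V₁ := by
    refine le_csSup ?_ ⟨u, hu, hu1, rfl⟩
    refine ⟨Real.pi, ?_⟩
    rintro a ⟨v₀, hv₀, hv₀1, rfl⟩
    have hbb : BddBelow {b | ∃ v₁ ∈ V₁, ‖v₁‖ = 1 ∧ b = InnerProductGeometry.angle v₀ v₁} :=
      ⟨0, by rintro b ⟨v₁, -, -, rfl⟩; exact InnerProductGeometry.angle_nonneg _ _⟩
    exact le_trans (csInf_le hbb ⟨e, he, he1, rfl⟩) (InnerProductGeometry.angle_le_pi _ _)
  have h3 : Real.arccos ‖(Submodule.orthogonalProjectionOnto V₁ u : Euc N)‖ ≤ subAngle V₀ V₁ :=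
    le_trans h1b h2
  have h4 : Real.cos (subAngle V₀ V₁) ≤ ‖(Submodule.orthogonalProjectionOnto V₁ u : Euc N)‖ := by
    have := Real.cos_le_cos_of_nonneg_of_le_pi (Real.arccos_nonneg _)
      (le_trans hlt.le (by linarith [Real.pi_pos])) h3
    rwa [Real.cos_arccos (le_trans (by norm_num) (norm_nonneg _)) hPu1] at this
  have h5 : ‖(Submodule.orthogonalProjectionOnto V₁ v : Euc N)‖ = ‖v‖ * ‖(Submodule.orthogonalProjectionOnto V₁ u : Euc N)‖ := by
    have hv_eq : v = ‖v‖ • u := by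
      rw [hu_def, smul_smul, mul_inv_cancel₀ (norm_ne_zero_iff.2 hv0), one_smul]
    conv_lhs => rw [hv_eq]
    rw [map_smul]
    rw [show ((‖v‖ • Submodule.orthogonalProjectionOnto V₁ u : V₁) : Euc N) = ‖v‖ • (Submodule.orthogonalProjectionOnto V₁ u : Euc N) from rfl]
    rw [norm_smul, norm_norm]
  rw [h5, mul_comm]
  exact mul_le_mul_of_nonneg_left h4 (norm_nonneg v)

end SebAux

set_option maxHeartbeats 1000000 in
theorem seb_radius_under_projection (N d : ℕ) (σ : Finset (Euc N)) (hσ : Nondegenerate σ)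
    (hcard : σ.card = d + 1) (H : AffineSubspace ℝ (Euc N))
    (hne : (H : Set (Euc N)).Nonempty) (hd : Module.finrank ℝ H.direction = d)
    (hang : affAngle (affineSpan ℝ (σ : Set (Euc N))) H < Real.pi / 2)
    (c : Euc N) (r : ℝ) (hr : IsSEB σ c r)
    (c' : Euc N) (r' : ℝ) (hr' : IsSEB (σ.image (projA H)) c' r') :
    r ≤ r' / Real.cos (affAngle (affineSpan ℝ (σ : Set (Euc N))) H) := by
  have hθ : affAngle (affineSpan ℝ (σ : Set (Euc N))) H
      = subAngle (affineSpan ℝ (σ : Set (Euc N))).direction H.direction := rfl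
  set V₀ := (affineSpan ℝ (σ : Set (Euc N))).direction with hV₀def
  set V₁ := H.direction with hV₁def
  have hV₀fin : Module.finrank ℝ V₀ = d := by
    rw [hV₀def, direction_affineSpan]
    have := hσ.finrank_vectorSpan (n := d) (by simpa [Fintype.card_coe] using hcard)
    rw [show Set.range (fun p : σ => (p : Euc N)) = (σ : Set (Euc N)) from Subtype.range_coe] at this
    exact this
  rcases Nat.eq_zero_or_pos d with hd0 | hdpos
  · -- degenerate case : a single point
    subst hd0
    obtain ⟨p, hp⟩ := Finset.card_eq_one.mp (by simpa using hcard)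
    have hV₀bot : V₀ = ⊥ := Submodule.finrank_eq_zero.mp hV₀fin
    have hθ0 : affAngle (affineSpan ℝ (σ : Set (Euc N))) H = 0 := by
      rw [hθ]
      unfold subAngle
      have hemp : {a | ∃ v₀ ∈ V₀, ‖v₀‖ = 1 ∧
          a = sInf {b | ∃ v₁ ∈ V₁, ‖v₁‖ = 1 ∧ b = InnerProductGeometry.angle v₀ v₁}}
          = (∅ : Set ℝ) := by
        ext a
        simp only [Set.mem_setOf_eq, Set.mem_empty_iff_false, iff_false, not_exists]
        rintro v₀ ⟨hv₀, hv₀1, -⟩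
        rw [hV₀bot, Submodule.mem_bot] at hv₀
        rw [hv₀, norm_zero] at hv₀1
        norm_num at hv₀1
      rw [hemp, Real.sSup_empty]
    have hr0 : r ≤ 0 := by
      apply hr.2 p 0
      intro q hq
      rw [hp, Finset.mem_singleton] at hq
      subst hq
      simp
    have hr'0 : 0 ≤ r' := le_trans dist_nonneg
      (hr'.1 (projA H p) (Finset.mem_image_of_mem _ (by simp [hp])))
    rw [hθ0, Real.cos_zero, div_one]
    linarith
  · -- main case
    have hV₁ne : V₁ ≠ ⊥ := by
      intro h
      rw [h, finrank_bot] at hd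
      omega
    have hV₀ne : V₀ ≠ ⊥ := by
      intro h
      rw [h, finrank_bot] at hV₀fin
      omega
    have hθlt : subAngle V₀ V₁ < Real.pi / 2 := by rw [← hθ]; exact hang
    have hθnn : 0 ≤ subAngle V₀ V₁ := subAngle_nonneg V₀ V₁ hV₀ne hV₁ne
    have hcos : 0 < Real.cos (subAngle V₀ V₁) :=
      Real.cos_pos_of_mem_Ioo ⟨by linarith [Real.pi_pos], hθlt⟩
    -- the projection restricted to V₀ is a bijection onto V₁
    set L : V₀ →ₗ[ℝ] V₁ := ((Submodule.orthogonalProjectionOnto V₁).toLinearMap).comp V₀.subtype with hLdef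
    have hinj : Function.Injective L := by
      rw [← LinearMap.ker_eq_bot]
      rw [Submodule.eq_bot_iff]
      rintro x hx
      have hx0 : (Submodule.orthogonalProjectionOnto V₁ (x : Euc N) : Euc N) = 0 := by
        have : L x = 0 := hx
        have : ((L x : V₁) : Euc N) = ((0 : V₁) : Euc N) := by rw [this]
        simpa [hLdef] using this
      have hkey := subAngle_key V₀ V₁ hV₁ne hθlt x.2
      rw [hx0, norm_zero] at hkey
      have hn : ‖(x : Euc N)‖ = 0 := by nlinarith [norm_nonneg (x : Euc N)]
      exact Subtype.ext (norm_eq_zero.mp hn)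
    have hsurj : Function.Surjective L := by
      have hrange : LinearMap.range L = ⊤ := by
        apply Submodule.eq_top_of_finrank_eq
        rw [LinearMap.finrank_range_of_inj hinj, hV₀fin, hd]
      exact LinearMap.range_eq_top.mp hrange
    obtain ⟨p₀, hp₀⟩ := Finset.card_pos.mp (by rw [hcard]; omega)
    have hp₀span : p₀ ∈ affineSpan ℝ (σ : Set (Euc N)) :=
      subset_affineSpan ℝ _ (Finset.mem_coe.2 hp₀)
    have hc1 : projA H c' ∈ H := projA_mem H hne c'
    have hq0 : projA H p₀ ∈ H := projA_mem H hne p₀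
    have hu : projA H c' - projA H p₀ ∈ V₁ := by
      simpa [vsub_eq_sub] using AffineSubspace.vsub_mem_direction hc1 hq0
    obtain ⟨w, hw⟩ := hsurj ⟨projA H c' - projA H p₀, hu⟩
    have hc''mem : (w : Euc N) + p₀ ∈ affineSpan ℝ (σ : Set (Euc N)) := by
      have hwdir : (w : Euc N) ∈ (affineSpan ℝ (σ : Set (Euc N))).direction := w.2
      simpa [vadd_eq_add] using AffineSubspace.vadd_mem_of_mem_direction hwdir hp₀span
    have hPw : (Submodule.orthogonalProjectionOnto V₁ ((w : Euc N) + p₀ - p₀) : Euc N)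
        = projA H c' - projA H p₀ := by
      rw [show (w : Euc N) + p₀ - p₀ = (w : Euc N) by abel]
      have := congrArg (fun z : V₁ => (z : Euc N)) hw
      simpa [hLdef] using this
    have hprojc'' : projA H ((w : Euc N) + p₀) = projA H c' := by
      have h1 := projA_sub H hne ((w : Euc N) + p₀) p₀
      rw [hPw] at h1
      exact sub_left_inj.mp h1
    have hb : ∀ p ∈ σ, dist p ((w : Euc N) + p₀) ≤ r' / Real.cos (subAngle V₀ V₁) := by
      intro p hp
      have hpspan : p ∈ affineSpan ℝ (σ : Set (Euc N)) :=
        subset_affineSpan ℝ _ (Finset.mem_coe.2 hp)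
      have hdir : p - ((w : Euc N) + p₀) ∈ V₀ := by
        simpa [vsub_eq_sub] using AffineSubspace.vsub_mem_direction hpspan hc''mem
      have h1 := subAngle_key V₀ V₁ hV₁ne hθlt hdir
      have h2 : (Submodule.orthogonalProjectionOnto V₁ (p - ((w : Euc N) + p₀)) : Euc N)
          = projA H p - projA H c' := by
        rw [← hprojc'']
        exact (projA_sub H hne p ((w : Euc N) + p₀)).symm
      have h3 : dist (projA H p) (projA H c') ≤ dist (projA H p) c' := by
        rw [dist_comm, dist_comm _ c']
        exact projA_dist_le H hne (projA_mem H hne p) c'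
      have h4 : dist (projA H p) c' ≤ r' := hr'.1 _ (Finset.mem_image_of_mem _ hp)
      have h5 : Real.cos (subAngle V₀ V₁) * dist p ((w : Euc N) + p₀) ≤ r' := by
        rw [dist_eq_norm]
        calc Real.cos (subAngle V₀ V₁) * ‖p - ((w : Euc N) + p₀)‖
            ≤ ‖(Submodule.orthogonalProjectionOnto V₁ (p - ((w : Euc N) + p₀)) : Euc N)‖ := h1
          _ = dist (projA H p) (projA H c') := by rw [h2, dist_eq_norm]
          _ ≤ r' := le_trans h3 h4
      rw [le_div_iff₀ hcos]
      linarith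
    rw [hθ]
    exact hr.2 ((w : Euc N) + p₀) _ hb
end
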